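/- The denominator 13x + y + z is strictly positive at every point of D, so B_0 is well defined on D; B_0 maps D bijectively onto D; and B_0 maps the boundary circle C onto C. -/

import Mathlib

open Real

/-- The rational map `B₀(x,y,z) = (9x, 2x+2y-z, 2x-y+2z)/(13x+y+z)`. -/
noncomputable def B0map (p : ℝ × ℝ × ℝ) : ℝ × ℝ × ℝ :=
  (9 * p.1 / (13 * p.1 + p.2.1 + p.2.2),
   (2 * p.1 + 2 * p.2.1 - p.2.2) / (13 * p.1 + p.2.1 + p.2.2),
   (2 * p.1 - p.2.1 + 2 * p.2.2) / (13 * p.1 + p.2.1 + p.2.2))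

/-- The closed disk `D` of radius `1/√6` centered at `(1/3,1/3,1/3)` in the plane
`x + y + z = 1`. -/
def Ddisk : Set (ℝ × ℝ × ℝ) :=
  {p | p.1 + p.2.1 + p.2.2 = 1 ∧
    (p.1 - 1 / 3) ^ 2 + (p.2.1 - 1 / 3) ^ 2 + (p.2.2 - 1 / 3) ^ 2 ≤ 1 / 6}

/-- The boundary circle `C` of the disk `D`. -/
def Ccirc : Set (ℝ × ℝ × ℝ) :=
  {p | p.1 + p.2.1 + p.2.2 = 1 ∧
    (p.1 - 1 / 3) ^ 2 + (p.2.1 - 1 / 3) ^ 2 + (p.2.2 - 1 / 3) ^ 2 = 1 / 6}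

/-- The inverse of `B₀` on the plane `x + y + z = 1`. -/
noncomputable def gmap (p : ℝ × ℝ × ℝ) : ℝ × ℝ × ℝ :=
  (p.1 / (9 - 12 * p.1),
   (3 * p.2.1 + 3 - 5 * p.1) / (9 - 12 * p.1),
   (3 * p.2.2 + 3 - 5 * p.1) / (9 - 12 * p.1))

lemma aux_x {x y z : ℝ} (hs : x + y + z = 1)
    (hq : (x - 1/3)^2 + (y - 1/3)^2 + (z - 1/3)^2 ≤ 1/6) :
    0 ≤ x ∧ x ≤ 2/3 := by
  constructor <;> nlinarith [sq_nonneg (y - z), sq_nonneg x, sq_nonneg (x - 2/3)]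

lemma mapsTo_B0 : Set.MapsTo B0map Ddisk Ddisk := by
  rintro ⟨x, y, z⟩ ⟨hs, hq⟩
  simp only at hs hq
  have hz : z = 1 - x - y := by linarith
  subst hz
  obtain ⟨hx0, hx1⟩ := aux_x hs hq
  have hd : 13 * x + y + (1 - x - y) = 12 * x + 1 := by ring
  have hdpos : (0:ℝ) < 12 * x + 1 := by linarith
  constructor
  · simp only [B0map, hd]
    field_simp
    ring
  · simp only [B0map, hd]
    have e : ∀ a : ℝ, a / (12 * x + 1) - 1/3 = (3*a - (12*x+1)) / (3*(12*x+1)) := by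
      intro a; field_simp
    rw [show (9 * x / (12 * x + 1) - 1/3) = (3*(9*x) - (12*x+1)) / (3*(12*x+1)) from e (9*x),
        e (2*x+2*y-(1-x-y)), e (2*x-y+2*(1-x-y)),
        div_pow, div_pow, div_pow, ← add_div, ← add_div,
        div_le_iff₀ (by positivity)]
    nlinarith [hq]

lemma mapsTo_g : Set.MapsTo gmap Ddisk Ddisk := by
  rintro ⟨x, y, z⟩ ⟨hs, hq⟩
  simp only at hs hq
  have hz : z = 1 - x - y := by linarith
  subst hz
  obtain ⟨hx0, hx1⟩ := aux_x hs hq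
  have hdpos : (0:ℝ) < 9 - 12 * x := by linarith
  constructor
  · simp only [gmap]
    rw [← add_div, ← add_div, div_eq_one_iff_eq hdpos.ne']
    ring
  · simp only [gmap]
    have e : ∀ a : ℝ, a / (9 - 12 * x) - 1/3 = (3*a - (9-12*x)) / (3*(9-12*x)) := by
      intro a; field_simp
    rw [show (x / (9 - 12 * x) - 1/3) = (3*x - (9-12*x)) / (3*(9-12*x)) from e x,
        e (3*y+3-5*x), e (3*(1-x-y)+3-5*x),
        div_pow, div_pow, div_pow, ← add_div, ← add_div,
        div_le_iff₀ (by positivity)]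
    nlinarith [hq]

lemma leftinv : ∀ p ∈ Ddisk, gmap (B0map p) = p := by
  rintro ⟨x, y, z⟩ ⟨hs, hq⟩
  simp only at hs hq
  have hz : z = 1 - x - y := by linarith
  subst hz
  obtain ⟨hx0, hx1⟩ := aux_x hs hq
  have hdpos : (0:ℝ) < 12 * x + 1 := by linarith
  have hne : (12 * x + 1 : ℝ) ≠ 0 := ne_of_gt hdpos
  have h9 : (9:ℝ) - 12 * (9 * x / (12 * x + 1)) = 9 / (12 * x + 1) := by
    field_simp; ring
  have hne9 : (9:ℝ) / (12 * x + 1) ≠ 0 := by positivity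
  simp only [B0map, gmap, show (13 * x + y + (1 - x - y) : ℝ) = 12 * x + 1 from by ring,
    h9, Prod.mk.injEq]
  refine ⟨?_, ?_, ?_⟩
  · rw [div_eq_iff hne9]; field_simp
  · rw [div_eq_iff hne9]; field_simp; ring
  · rw [div_eq_iff hne9]; field_simp; ring

lemma rightinv : ∀ p ∈ Ddisk, B0map (gmap p) = p := by
  rintro ⟨x, y, z⟩ ⟨hs, hq⟩
  simp only at hs hq
  have hz : z = 1 - x - y := by linarith
  subst hz
  obtain ⟨hx0, hx1⟩ := aux_x hs hq
  have hdpos : (0:ℝ) < 9 - 12 * x := by linarith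
  have hden : 13 * (x / (9 - 12 * x)) + (3 * y + 3 - 5 * x) / (9 - 12 * x) +
      (3 * (1 - x - y) + 3 - 5 * x) / (9 - 12 * x) = 9 / (9 - 12 * x) := by
    have hne : (9 - 12 * x : ℝ) ≠ 0 := ne_of_gt hdpos
    field_simp
    ring
  have hne : (9 - 12 * x : ℝ) ≠ 0 := ne_of_gt hdpos
  have hne9 : (9:ℝ) / (9 - 12 * x) ≠ 0 := by positivity
  simp only [B0map, gmap, hden, Prod.mk.injEq]
  refine ⟨?_, ?_, ?_⟩
  · rw [← mul_div_assoc, div_eq_iff hne9]; field_simp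
  · rw [div_eq_iff hne9]; field_simp; congr 1; ring
  · rw [div_eq_iff hne9]; field_simp; congr 1; ring

lemma circ_subset_disk : Ccirc ⊆ Ddisk := fun p hp => ⟨hp.1, le_of_eq hp.2⟩

lemma mapsTo_B0_circ : ∀ p ∈ Ccirc, B0map p ∈ Ccirc := by
  rintro ⟨x, y, z⟩ ⟨hs, hq⟩
  simp only at hs hq
  have hz : z = 1 - x - y := by linarith
  subst hz
  obtain ⟨hx0, hx1⟩ := aux_x hs (le_of_eq hq)
  have hd : 13 * x + y + (1 - x - y) = 12 * x + 1 := by ring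
  have hdpos : (0:ℝ) < 12 * x + 1 := by linarith
  constructor
  · simp only [B0map, hd]
    field_simp
    ring
  · simp only [B0map, hd]
    have e : ∀ a : ℝ, a / (12 * x + 1) - 1/3 = (3*a - (12*x+1)) / (3*(12*x+1)) := by
      intro a; field_simp
    rw [show (9 * x / (12 * x + 1) - 1/3) = (3*(9*x) - (12*x+1)) / (3*(12*x+1)) from e (9*x),
        e (2*x+2*y-(1-x-y)), e (2*x-y+2*(1-x-y)),
        div_pow, div_pow, div_pow, ← add_div, ← add_div,
        div_eq_iff (by positivity)]
    linear_combination 81 * hq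

lemma mapsTo_g_circ : ∀ p ∈ Ccirc, gmap p ∈ Ccirc := by
  rintro ⟨x, y, z⟩ ⟨hs, hq⟩
  simp only at hs hq
  have hz : z = 1 - x - y := by linarith
  subst hz
  obtain ⟨hx0, hx1⟩ := aux_x hs (le_of_eq hq)
  have hdpos : (0:ℝ) < 9 - 12 * x := by linarith
  constructor
  · simp only [gmap]
    rw [← add_div, ← add_div, div_eq_one_iff_eq hdpos.ne']
    ring
  · simp only [gmap]
    have e : ∀ a : ℝ, a / (9 - 12 * x) - 1/3 = (3*a - (9-12*x)) / (3*(9-12*x)) := by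
      intro a; field_simp
    rw [show (x / (9 - 12 * x) - 1/3) = (3*x - (9-12*x)) / (3*(9-12*x)) from e x,
        e (3*y+3-5*x), e (3*(1-x-y)+3-5*x),
        div_pow, div_pow, div_pow, ← add_div, ← add_div,
        div_eq_iff (by positivity)]
    linear_combination 81 * hq

/-- The denominator `13x + y + z` is strictly positive at every point of `D` (so `B₀`
is well defined on `D`); `B₀` maps `D` bijectively onto `D`; and `B₀` maps the
boundary circle `C` onto `C`. -/
theorem stmt_17 :
    (∀ p ∈ Ddisk, 0 < 13 * p.1 + p.2.1 + p.2.2) ∧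
    Set.BijOn B0map Ddisk Ddisk ∧
    B0map '' Ccirc = Ccirc := by
  refine ⟨?_, ⟨mapsTo_B0, ?_, ?_⟩, ?_⟩
  · rintro ⟨x, y, z⟩ ⟨hs, hq⟩
    simp only at hs hq ⊢
    obtain ⟨hx0, _⟩ := aux_x hs hq
    linarith
  · intro p hp q hq h
    have := congrArg gmap h
    rwa [leftinv p hp, leftinv q hq] at this
  · intro q hq
    exact ⟨gmap q, mapsTo_g hq, rightinv q hq⟩
  · apply Set.eq_of_subset_of_subset
    · rintro q ⟨p, hp, rfl⟩
      exact mapsTo_B0_circ p hp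
    · intro q hq
      exact ⟨gmap q, mapsTo_g_circ q hq, rightinv q (circ_subset_disk hq)⟩
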